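/- arXiv:1301.2712 — 3 statements merged into one kernel-verified Lean document; each statement's English description precedes it below -/
import Mathlib

section
/- Let $n \geq 3$ and suppose the characteristic of the algebraically closed field $k$ does not divide $n$. Two elements $u, u'$ of the centralizer $z_{sub}$ of the subregular nilpotent in $\mathfrak{sl}_n$, parametrized by $(a_1,\ldots,a_{n-1},b,c)$ and $(a_1',\ldots,a_{n-1}',b',c')$, commute if and only if all $2\times 2$ minors of the matrix $\begin{pmatrix} a_1 & a_1' \\ b & b' \\ c & c' \end{pmatrix}$ vanish. -/
/-- An element of the centralizer of the subregular nilpotent (Jordan type `[n-1,1]`)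
in `sl_n`, parametrized by `a 0 = a₁, …, a (n-2) = a_{n-1}`, `b`, `c`. -/
def centMat (k : Type*) [Field k] (n : ℕ) (a : ℕ → k) (b c : k) :
    Matrix (Fin n) (Fin n) k :=
  Matrix.of fun i j =>
    if i.val < n - 1 ∧ j.val < n - 1 then
      (if j.val ≤ i.val then a (i.val - j.val) else 0)
    else if i.val = n - 2 ∧ j.val = n - 1 then c
    else if i.val = n - 1 ∧ j.val = 0 then b
    else if i.val = n - 1 ∧ j.val = n - 1 then (1 - (n : k)) * a 0
    else 0

section aux
variable {k : Type*} [Field k]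

lemma toepl_comm (m i j : ℕ) (a a' : ℕ → k) (hi : i < m) :
    ∑ l ∈ Finset.range m, (if l ≤ i ∧ j ≤ l then a (i - l) * a' (l - j) else 0)
    = ∑ l ∈ Finset.range m, (if l ≤ i ∧ j ≤ l then a' (i - l) * a (l - j) else 0) := by
  rw [← Finset.sum_filter, ← Finset.sum_filter]
  refine Finset.sum_nbij' (fun l => i + j - l) (fun l => i + j - l) ?_ ?_ ?_ ?_ ?_ <;>
    intro l hl <;> simp only [Finset.mem_filter, Finset.mem_range] at hl ⊢
  · omega
  · omega
  · omega
  · omega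
  · obtain ⟨-, h1, h2⟩ := hl
    have e1 : i - (i + j - l) = l - j := by omega
    have e2 : i + j - l - j = i - l := by omega
    rw [e1, e2]; ring

lemma sum_ite_val {M : Type*} [AddCommMonoid M] (m t : ℕ) (x : M) :
    ∑ l : Fin m, (if l.val = t then x else 0) = if t < m then x else 0 := by
  rw [Fin.sum_univ_eq_sum_range (fun l => if l = t then x else 0) m]
  simp [Finset.sum_ite_eq' (Finset.range m) t (fun _ => x)]

set_option maxHeartbeats 1000000 in
lemma comm_apply (p : ℕ) (a a' : ℕ → k) (b c b' c' : k) (i j : Fin (p + 3)) :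
    (centMat k (p+3) a b c * centMat k (p+3) a' b' c') i j
      - (centMat k (p+3) a' b' c' * centMat k (p+3) a b c) i j =
    if i.val = p + 1 ∧ j.val = 0 then c * b' - c' * b
    else if i.val = p + 1 ∧ j.val = p + 2 then ((p : k) + 3) * (a 0 * c' - a' 0 * c)
    else if i.val = p + 2 ∧ j.val = 0 then -((p : k) + 3) * (a 0 * b' - a' 0 * b)
    else 0 := by
  have e1 : p + 3 - 1 = p + 2 := rfl
  have e2 : p + 3 - 2 = p + 1 := rfl
  obtain ⟨iv, hiv⟩ := i
  obtain ⟨jv, hjv⟩ := j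
  rw [Matrix.mul_apply, Matrix.mul_apply, ← Finset.sum_sub_distrib]
  rw [Fin.sum_univ_castSucc]
  by_cases hi : iv = p + 2 <;> by_cases hj : jv = p + 2
  · -- i = j = last
    subst hi hj
    have hz : ∀ l : Fin (p + 2),
        (centMat k (p+3) a b c ⟨p+2, hiv⟩ l.castSucc *
          centMat k (p+3) a' b' c' l.castSucc ⟨p+2, hjv⟩ -
        centMat k (p+3) a' b' c' ⟨p+2, hiv⟩ l.castSucc *
          centMat k (p+3) a b c l.castSucc ⟨p+2, hjv⟩) = 0 := by
      intro l
      have hl := l.isLt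
      simp only [centMat, Matrix.of_apply, Fin.coe_castSucc, Fin.val_last, e1, e2,
        Fin.is_lt, lt_self_iff_false, lt_irrefl, and_true, true_and, and_false, false_and,
        ite_true, ite_false, if_true, if_false, eq_self_iff_true]
      split_ifs <;> first | ring1 | (exfalso; omega) | (exfalso; tauto) | (push_cast; ring1)
    rw [Finset.sum_congr rfl fun l _ => hz l]
    simp only [centMat, Matrix.of_apply, Fin.val_last, Finset.sum_const_zero, e1, e2,
      Fin.is_lt, lt_self_iff_false, lt_irrefl, and_true, true_and, and_false, false_and,
      ite_true, ite_false, if_true, if_false, eq_self_iff_true]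
    split_ifs <;> first | ring1 | (exfalso; omega) | (exfalso; tauto) | (push_cast; ring1)
  · -- i = last, j < p + 2
    subst hi
    have hj2 : jv < p + 2 := by omega
    have hz : ∀ l : Fin (p + 2),
        (centMat k (p+3) a b c ⟨p+2, hiv⟩ l.castSucc *
          centMat k (p+3) a' b' c' l.castSucc ⟨jv, hjv⟩ -
        centMat k (p+3) a' b' c' ⟨p+2, hiv⟩ l.castSucc *
          centMat k (p+3) a b c l.castSucc ⟨jv, hjv⟩) =
        (if l.val = 0 then (if jv = 0 then b * a' 0 - b' * a 0 else 0) else 0) := by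
      intro l
      have hl := l.isLt
      simp only [centMat, Matrix.of_apply, Fin.coe_castSucc, Fin.val_last, e1, e2,
        Fin.is_lt, lt_self_iff_false, lt_irrefl, and_true, true_and, and_false, false_and,
        ite_true, ite_false, if_true, if_false, eq_self_iff_true]
      split_ifs <;> first | ring1 | (exfalso; omega) | (exfalso; tauto) |
        (have h0 : l.val - jv = 0 := by omega
         rw [h0]; try ring1)
    rw [Finset.sum_congr rfl fun l _ => hz l, sum_ite_val]
    simp only [centMat, Matrix.of_apply, Fin.val_last, e1, e2,
      Fin.is_lt, lt_self_iff_false, lt_irrefl, and_true, true_and, and_false, false_and,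
      ite_true, ite_false, if_true, if_false, eq_self_iff_true]
    split_ifs <;> first | ring1 | (exfalso; omega) | (exfalso; tauto) | (push_cast; ring1)
  · -- i < p + 2, j = last
    subst hj
    have hi2 : iv < p + 2 := by omega
    have hz : ∀ l : Fin (p + 2),
        (centMat k (p+3) a b c ⟨iv, hiv⟩ l.castSucc *
          centMat k (p+3) a' b' c' l.castSucc ⟨p+2, hjv⟩ -
        centMat k (p+3) a' b' c' ⟨iv, hiv⟩ l.castSucc *
          centMat k (p+3) a b c l.castSucc ⟨p+2, hjv⟩) =
        (if l.val = p + 1 then (if iv = p + 1 then a 0 * c' - a' 0 * c else 0) else 0) := by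
      intro l
      have hl := l.isLt
      simp only [centMat, Matrix.of_apply, Fin.coe_castSucc, Fin.val_last, e1, e2,
        Fin.is_lt, lt_self_iff_false, lt_irrefl, and_true, true_and, and_false, false_and,
        ite_true, ite_false, if_true, if_false, eq_self_iff_true]
      split_ifs <;> first | ring1 | (exfalso; omega) | (exfalso; tauto) |
        (have h0 : iv - l.val = 0 := by omega
         rw [h0]; try ring1)
    rw [Finset.sum_congr rfl fun l _ => hz l, sum_ite_val]
    simp only [centMat, Matrix.of_apply, Fin.val_last, e1, e2,
      Fin.is_lt, lt_self_iff_false, lt_irrefl, and_true, true_and, and_false, false_and,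
      ite_true, ite_false, if_true, if_false, eq_self_iff_true]
    split_ifs <;> first | ring1 | (exfalso; omega) | (exfalso; tauto) | (push_cast; ring1)
  · -- i, j < p + 2
    have hi2 : iv < p + 2 := by omega
    have hj2 : jv < p + 2 := by omega
    have hz : ∀ l : Fin (p + 2),
        (centMat k (p+3) a b c ⟨iv, hiv⟩ l.castSucc *
          centMat k (p+3) a' b' c' l.castSucc ⟨jv, hjv⟩ -
        centMat k (p+3) a' b' c' ⟨iv, hiv⟩ l.castSucc *
          centMat k (p+3) a b c l.castSucc ⟨jv, hjv⟩) =
        ((if l.val ≤ iv ∧ jv ≤ l.val then a (iv - l.val) * a' (l.val - jv) else 0) -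
         (if l.val ≤ iv ∧ jv ≤ l.val then a' (iv - l.val) * a (l.val - jv) else 0)) := by
      intro l
      have hl := l.isLt
      simp only [centMat, Matrix.of_apply, Fin.coe_castSucc, Fin.val_last, e1, e2,
        Fin.is_lt, lt_self_iff_false, lt_irrefl, and_true, true_and, and_false, false_and,
        ite_true, ite_false, if_true, if_false, eq_self_iff_true]
      split_ifs <;> first | ring1 | (exfalso; omega) | (exfalso; tauto) | (push_cast; ring1)
    rw [Finset.sum_congr rfl fun l _ => hz l, Finset.sum_sub_distrib,
      Fin.sum_univ_eq_sum_range (fun l => if l ≤ iv ∧ jv ≤ l then a (iv - l) * a' (l - jv) else 0),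
      Fin.sum_univ_eq_sum_range (fun l => if l ≤ iv ∧ jv ≤ l then a' (iv - l) * a (l - jv) else 0),
      toepl_comm (p+2) iv jv a a' hi2, sub_self, zero_add]
    simp only [centMat, Matrix.of_apply, Fin.val_last, e1, e2,
      Fin.is_lt, lt_self_iff_false, lt_irrefl, and_true, true_and, and_false, false_and,
      ite_true, ite_false, if_true, if_false, eq_self_iff_true]
    split_ifs <;> first | ring1 | (exfalso; omega) | (exfalso; tauto) | (push_cast; ring1)


end aux

/-- if `char k` does not divide `n`, two elements of the centralizer `z_sub`
commute iff all 2×2 minors of the 3×2 matrix `[[a₁,a₁'],[b,b'],[c,c']]` vanish. -/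
theorem stmt2 (k : Type*) [Field k] [IsAlgClosed k] (n : ℕ) (hn : 3 ≤ n)
    (hchar : (n : k) ≠ 0)
    (a a' : ℕ → k) (b c b' c' : k) :
    centMat k n a b c * centMat k n a' b' c' =
      centMat k n a' b' c' * centMat k n a b c ↔
      (a 0 * b' - a' 0 * b = 0 ∧ a 0 * c' - a' 0 * c = 0 ∧ b * c' - b' * c = 0) := by
  obtain ⟨p, rfl⟩ : ∃ p, n = p + 3 := ⟨n - 3, by omega⟩
  have hc : ((p : k) + 3) ≠ 0 := by push_cast at hchar; exact hchar
  constructor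
  · intro h
    have key : ∀ (iv jv : ℕ) (hiv : iv < p + 3) (hjv : jv < p + 3),
        (if iv = p + 1 ∧ jv = 0 then c * b' - c' * b
        else if iv = p + 1 ∧ jv = p + 2 then ((p : k) + 3) * (a 0 * c' - a' 0 * c)
        else if iv = p + 2 ∧ jv = 0 then -((p : k) + 3) * (a 0 * b' - a' 0 * b)
        else 0) = 0 := by
      intro iv jv hiv hjv
      have H := comm_apply p a a' b c b' c' ⟨iv, hiv⟩ ⟨jv, hjv⟩
      rw [h, sub_self] at H
      exact H.symm
    have H1 := key (p+2) 0 (by omega) (by omega)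
    rw [if_neg (by omega), if_neg (by omega), if_pos ⟨rfl, rfl⟩] at H1
    have H2 := key (p+1) (p+2) (by omega) (by omega)
    rw [if_neg (by omega), if_pos ⟨rfl, rfl⟩] at H2
    have H3 := key (p+1) 0 (by omega) (by omega)
    rw [if_pos ⟨rfl, rfl⟩] at H3
    refine ⟨?_, ?_, ?_⟩
    · have H1' : ((p : k) + 3) * (a 0 * b' - a' 0 * b) = 0 := by linear_combination -H1
      rcases mul_eq_zero.mp H1' with h' | h'
      · exact absurd h' hc
      · exact h'
    · rcases mul_eq_zero.mp H2 with h' | h'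
      · exact absurd h' hc
      · exact h'
    · linear_combination -H3
  · rintro ⟨h1, h2, h3⟩
    ext i j
    have H := comm_apply p a a' b c b' c' i j
    apply sub_eq_zero.mp
    rw [H]
    split_ifs
    · linear_combination -h3
    · linear_combination ((p : k) + 3) * h2
    · linear_combination (-((p : k) + 3)) * h1
    · rfl
end

section
/- Let $n \geq 3$ and suppose the characteristic of $k$ divides $n$. Two elements $u, u'$ of the centralizer $z_{sub}$ of the subregular nilpotent in $\mathfrak{sl}_n(k)$, parametrized by $(a_1,\ldots,a_{n-1},b,c)$ and $(a_1',\ldots,a_{n-1}',b',c')$, commute if and only if $cb' - c'b = 0$. -/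
section Aux

variable {k : Type*} [Field k] {m : ℕ}

lemma centMat_apply_block (a : ℕ → k) (b c : k) (i j : Fin (m + 3))
    (hi : i.val < m + 2) (hj : j.val < m + 2) :
    centMat k (m + 3) a b c i j = if j.val ≤ i.val then a (i.val - j.val) else 0 := by
  simp only [centMat, Matrix.of_apply]
  split_ifs <;> first | rfl | omega

lemma centMat_apply_last_col (a : ℕ → k) (b c : k) (i j : Fin (m + 3))
    (hj : j.val = m + 2) :
    centMat k (m + 3) a b c i j =
      if i.val = m + 1 then c else if i.val = m + 2 then (1 - ((m + 3 : ℕ) : k)) * a 0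
      else 0 := by
  simp only [centMat, Matrix.of_apply]
  split_ifs <;> first | rfl | omega

lemma centMat_apply_last_row (a : ℕ → k) (b c : k) (i j : Fin (m + 3))
    (hi : i.val = m + 2) (hj : j.val < m + 2) :
    centMat k (m + 3) a b c i j = if j.val = 0 then b else 0 := by
  simp only [centMat, Matrix.of_apply]
  split_ifs <;> first | rfl | omega

lemma sum_single {N : ℕ} (x0 : Fin N) (v : k) :
    (∑ x : Fin N, if x = x0 then v else 0) = v := by simp

lemma key (hchar : ((m + 3 : ℕ) : k) = 0) (a a' : ℕ → k) (b c b' c' : k)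
    (i j : Fin (m + 3)) :
    (centMat k (m + 3) a b c * centMat k (m + 3) a' b' c') i j -
      (centMat k (m + 3) a' b' c' * centMat k (m + 3) a b c) i j =
      if i.val = m + 1 ∧ j.val = 0 then c * b' - c' * b else 0 := by
  rw [Matrix.mul_apply, Matrix.mul_apply, ← Finset.sum_sub_distrib,
    Fin.sum_univ_castSucc]
  have hL : (Fin.last (m + 2)).val = m + 2 := rfl
  have hcs : ∀ x : Fin (m + 2), (Fin.castSucc x).val < m + 2 := fun x => by
    simpa using x.isLt
  have h1 : (1 : k) - ((m + 3 : ℕ) : k) = 1 := by rw [hchar] <;> ring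
  rcases Nat.lt_or_ge i.val (m + 2) with hi | hi
  · rcases Nat.lt_or_ge j.val (m + 2) with hj | hj
    · -- both in block
      have hsum : ∑ x : Fin (m + 2),
          (centMat k (m + 3) a b c i x.castSucc *
            centMat k (m + 3) a' b' c' x.castSucc j -
           centMat k (m + 3) a' b' c' i x.castSucc *
            centMat k (m + 3) a b c x.castSucc j) = 0 := by
        apply Finset.sum_ninvolution
          (fun x => if h : j.val ≤ x.val ∧ x.val ≤ i.val then
            (⟨i.val + j.val - x.val, by omega⟩ : Fin (m + 2)) else x)
        · intro x
          by_cases h : j.val ≤ x.val ∧ x.val ≤ i.val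
          · simp only [dif_pos h]
            rw [centMat_apply_block a b c i x.castSucc hi (hcs x),
              centMat_apply_block a' b' c' x.castSucc j (hcs x) hj,
              centMat_apply_block a' b' c' i x.castSucc hi (hcs x),
              centMat_apply_block a b c x.castSucc j (hcs x) hj,
              centMat_apply_block a b c i _ hi (hcs _),
              centMat_apply_block a' b' c' _ j (hcs _) hj,
              centMat_apply_block a' b' c' i _ hi (hcs _),
              centMat_apply_block a b c _ j (hcs _) hj]
            simp only [Fin.coe_castSucc]
            have e1 : i.val - (i.val + j.val - x.val) = x.val - j.val := by omega
            have e2 : i.val + j.val - x.val - j.val = i.val - x.val := by omega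
            simp only [if_pos (by omega : (i.val + j.val - x.val) ≤ i.val),
              if_pos (by omega : j.val ≤ i.val + j.val - x.val),
              if_pos h.2, if_pos h.1, e1, e2]
            try ring
          · simp only [dif_neg h]
            rw [centMat_apply_block a b c i x.castSucc hi (hcs x),
              centMat_apply_block a' b' c' x.castSucc j (hcs x) hj,
              centMat_apply_block a' b' c' i x.castSucc hi (hcs x),
              centMat_apply_block a b c x.castSucc j (hcs x) hj]
            simp only [Fin.coe_castSucc]
            rcases Nat.lt_or_ge x.val j.val with h' | h'
            · simp only [if_neg (by omega : ¬ j.val ≤ x.val)] <;> ring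
            · simp only [if_neg (by omega : ¬ x.val ≤ i.val)] <;> ring
        · intro x hx
          by_cases h : j.val ≤ x.val ∧ x.val ≤ i.val
          · simp only [dif_pos h]
            intro heq
            apply hx
            have hv : i.val + j.val - x.val = x.val := congrArg Fin.val heq
            have hix : i.val - x.val = x.val - j.val := by omega
            rw [centMat_apply_block a b c i x.castSucc hi (hcs x),
              centMat_apply_block a' b' c' x.castSucc j (hcs x) hj,
              centMat_apply_block a' b' c' i x.castSucc hi (hcs x),
              centMat_apply_block a b c x.castSucc j (hcs x) hj]
            simp only [Fin.coe_castSucc, if_pos h.1, if_pos h.2, hix]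
            try ring
          · exfalso
            apply hx
            rw [centMat_apply_block a b c i x.castSucc hi (hcs x),
              centMat_apply_block a' b' c' x.castSucc j (hcs x) hj,
              centMat_apply_block a' b' c' i x.castSucc hi (hcs x),
              centMat_apply_block a b c x.castSucc j (hcs x) hj]
            simp only [Fin.coe_castSucc]
            rcases Nat.lt_or_ge x.val j.val with h' | h'
            · simp only [if_neg (by omega : ¬ j.val ≤ x.val)] <;> ring
            · simp only [if_neg (by omega : ¬ x.val ≤ i.val)] <;> ring
        · intro x; exact Finset.mem_univ _
        · intro x
          by_cases h : j.val ≤ x.val ∧ x.val ≤ i.val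
          · have h2 : j.val ≤ i.val + j.val - x.val ∧ i.val + j.val - x.val ≤ i.val :=
              ⟨by omega, by omega⟩
            simp only [dif_pos h, dif_pos h2]
            ext
            simp only
            omega
          · simp only [dif_neg h, dif_neg h]
      rw [hsum, zero_add,
        centMat_apply_last_col a b c i (Fin.last (m+2)) hL,
        centMat_apply_last_col a' b' c' i (Fin.last (m+2)) hL,
        centMat_apply_last_row a' b' c' (Fin.last (m+2)) j hL hj,
        centMat_apply_last_row a b c (Fin.last (m+2)) j hL hj]
      split_ifs <;> first | (exfalso; omega) | (simp only [h1] <;> ring) | ring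
    · -- j = last column, i in block
      have hj' : j.val = m + 2 := by omega
      have hsum : ∀ x : Fin (m + 2), (x ∈ Finset.univ) →
          (centMat k (m + 3) a b c i x.castSucc *
            centMat k (m + 3) a' b' c' x.castSucc j -
           centMat k (m + 3) a' b' c' i x.castSucc *
            centMat k (m + 3) a b c x.castSucc j) =
          if x = (⟨m + 1, by omega⟩ : Fin (m + 2)) then
            (if i.val = m + 1 then a 0 * c' - a' 0 * c else 0) else 0 := by
        intro x _
        rw [centMat_apply_block a b c i x.castSucc hi (hcs x),
          centMat_apply_block a' b' c' i x.castSucc hi (hcs x),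
          centMat_apply_last_col a' b' c' x.castSucc j hj',
          centMat_apply_last_col a b c x.castSucc j hj']
        simp only [Fin.coe_castSucc, Fin.ext_iff]
        have hx := x.isLt
        by_cases hx1 : x.val = m + 1
        · simp only [if_neg (by omega : ¬ x.val = m + 2), if_pos hx1]
          by_cases hi1 : i.val = m + 1
          · simp only [if_pos (by omega : x.val ≤ i.val), if_pos hi1,
              (by omega : i.val - x.val = 0)]
            try ring
          · simp only [if_neg (by omega : ¬ x.val ≤ i.val), if_neg hi1]
            try ring
        · simp only [if_neg hx1, if_neg (by omega : ¬ x.val = m + 2)]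
          try ring
      rw [Finset.sum_congr rfl hsum, sum_single,
        centMat_apply_last_col a b c i (Fin.last (m+2)) hL,
        centMat_apply_last_col a' b' c' i (Fin.last (m+2)) hL,
        centMat_apply_last_col a' b' c' (Fin.last (m+2)) j hj',
        centMat_apply_last_col a b c (Fin.last (m+2)) j hj', hL]
      split_ifs <;> first | (exfalso; omega) | (simp only [h1] <;> ring) | ring
  · -- i = last row
    have hi' : i.val = m + 2 := by omega
    rcases Nat.lt_or_ge j.val (m + 2) with hj | hj
    · have hsum : ∀ x : Fin (m + 2), (x ∈ Finset.univ) →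
          (centMat k (m + 3) a b c i x.castSucc *
            centMat k (m + 3) a' b' c' x.castSucc j -
           centMat k (m + 3) a' b' c' i x.castSucc *
            centMat k (m + 3) a b c x.castSucc j) =
          if x = (⟨0, by omega⟩ : Fin (m + 2)) then
            (if j.val = 0 then b * a' 0 - b' * a 0 else 0) else 0 := by
        intro x _
        rw [centMat_apply_last_row a b c i x.castSucc hi' (hcs x),
          centMat_apply_last_row a' b' c' i x.castSucc hi' (hcs x),
          centMat_apply_block a' b' c' x.castSucc j (hcs x) hj,
          centMat_apply_block a b c x.castSucc j (hcs x) hj]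
        simp only [Fin.coe_castSucc, Fin.ext_iff]
        by_cases hx0 : x.val = 0
        · simp only [if_pos hx0]
          by_cases hj0 : j.val = 0
          · simp only [if_pos (by omega : j.val ≤ x.val), if_pos hj0,
              (by omega : x.val - j.val = 0)]
            try ring
          · simp only [if_neg (by omega : ¬ j.val ≤ x.val), if_neg hj0]
            try ring
        · simp only [if_neg hx0] <;> ring
      rw [Finset.sum_congr rfl hsum, sum_single,
        centMat_apply_last_col a b c i (Fin.last (m+2)) hL,
        centMat_apply_last_col a' b' c' i (Fin.last (m+2)) hL,
        centMat_apply_last_row a' b' c' (Fin.last (m+2)) j hL hj,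
        centMat_apply_last_row a b c (Fin.last (m+2)) j hL hj]
      split_ifs <;> first | (exfalso; omega) | (simp only [h1] <;> ring) | ring
    · -- i = last, j = last
      have hj' : j.val = m + 2 := by omega
      have hsum : ∀ x : Fin (m + 2), (x ∈ Finset.univ) →
          (centMat k (m + 3) a b c i x.castSucc *
            centMat k (m + 3) a' b' c' x.castSucc j -
           centMat k (m + 3) a' b' c' i x.castSucc *
            centMat k (m + 3) a b c x.castSucc j) = 0 := by
        intro x _
        rw [centMat_apply_last_row a b c i x.castSucc hi' (hcs x),
          centMat_apply_last_row a' b' c' i x.castSucc hi' (hcs x),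
          centMat_apply_last_col a' b' c' x.castSucc j hj',
          centMat_apply_last_col a b c x.castSucc j hj']
        simp only [Fin.coe_castSucc]
        have hx := x.isLt
        by_cases hx0 : x.val = 0
        · simp only [if_pos hx0, if_neg (by omega : ¬ x.val = m + 1),
            if_neg (by omega : ¬ x.val = m + 2)]
          try ring
        · simp only [if_neg hx0] <;> ring
      rw [Finset.sum_congr rfl hsum, Finset.sum_const_zero, zero_add,
        centMat_apply_last_col a b c i (Fin.last (m+2)) hL,
        centMat_apply_last_col a' b' c' i (Fin.last (m+2)) hL,
        centMat_apply_last_col a' b' c' (Fin.last (m+2)) j hj',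
        centMat_apply_last_col a b c (Fin.last (m+2)) j hj', hL]
      split_ifs <;> first | (exfalso; omega) | (simp only [h1] <;> ring) | ring

end Aux

/-- if `char k` divides `n`, two elements of the centralizer `z_sub`
commute iff `cb' - c'b = 0`. -/
theorem stmt3 (k : Type*) [Field k] [IsAlgClosed k] (n : ℕ) (hn : 3 ≤ n)
    (hchar : (n : k) = 0)
    (a a' : ℕ → k) (b c b' c' : k) :
    centMat k n a b c * centMat k n a' b' c' =
      centMat k n a' b' c' * centMat k n a b c ↔
      c * b' - c' * b = 0 := by
  obtain ⟨m, rfl⟩ : ∃ m, n = m + 3 := ⟨n - 3, by omega⟩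
  constructor
  · intro h
    have hk := key hchar a a' b c b' c' (⟨m + 1, by omega⟩ : Fin (m + 3))
      (⟨0, by omega⟩ : Fin (m + 3))
    rw [h, sub_self, if_pos ⟨rfl, rfl⟩] at hk
    exact hk.symm
  · intro h
    ext i j
    have hk := key hchar a a' b c b' c' i j
    rw [h] at hk
    have : (if i.val = m + 1 ∧ j.val = 0 then (0:k) else 0) = 0 := by
      split_ifs <;> rfl
    rw [this] at hk
    exact sub_eq_zero.mp hk
end

section
/- Let $X_{i,j,m}$ be the $3\times(i+j+m)$ staircase matrix of indeterminates as above (second row vanishing in the first $i$ columns, third row vanishing in the first $i+j$ columns). Then the rank-$\leq 1$ locus $V(I_2(X_{i,j,m}))$ decomposes as the union of three closed subsets: (1) the locus where the second and third rows are identically zero, (2) the locus where $x_1=\cdots=x_i=0$ and the third row is zero and the remaining $2\times(j+m)$ submatrix has rank $\leq 1$, and (3) the locus where $x_1=\cdots=x_{i+j}=0$, $y_1=\cdots=y_j=0$, and the remaining $3\times m$ submatrix has rank $\leq 1$. -/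
/-- a `3 × (i+j+m)` staircase matrix (second row vanishing in the first `i`
columns, third row vanishing in the first `i+j` columns) has rank at most 1 (all
`2 × 2` minors vanish) iff (1) the second and third rows vanish, or (2) the first `i`
entries of the first row vanish, the third row vanishes, and the remaining `2 × (j+m)`
submatrix has rank at most 1, or (3) the first `i+j` entries of the first two rows vanish
and the remaining `3 × m` submatrix has rank at most 1. -/
theorem stmt8 (k : Type*) [Field k] (i j m : ℕ)
    (M : Matrix (Fin 3) (Fin (i + j + m)) k)
    (h2 : ∀ c : Fin (i + j + m), c.val < i → M 1 c = 0)
    (h3 : ∀ c : Fin (i + j + m), c.val < i + j → M 2 c = 0) :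
    (∀ (r r' : Fin 3) (c c' : Fin (i + j + m)),
        M r c * M r' c' - M r c' * M r' c = 0) ↔
      ((∀ c, M 1 c = 0 ∧ M 2 c = 0) ∨
       ((∀ c : Fin (i + j + m), c.val < i → M 0 c = 0) ∧ (∀ c, M 2 c = 0) ∧
         (∀ c c' : Fin (i + j + m), i ≤ c.val → i ≤ c'.val →
           M 0 c * M 1 c' - M 0 c' * M 1 c = 0)) ∨
       ((∀ c : Fin (i + j + m), c.val < i + j → M 0 c = 0) ∧
        (∀ c : Fin (i + j + m), c.val < i + j → M 1 c = 0) ∧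
         (∀ (r r' : Fin 3) (c c' : Fin (i + j + m)), i + j ≤ c.val → i + j ≤ c'.val →
           M r c * M r' c' - M r c' * M r' c = 0))) := by
  constructor
  · intro hmin
    by_cases h2z : ∀ c, M 2 c = 0
    · by_cases h1z : ∀ c, M 1 c = 0
      · exact Or.inl fun c => ⟨h1z c, h2z c⟩
      · push_neg at h1z
        obtain ⟨c0, hc0⟩ := h1z
        refine Or.inr (Or.inl ⟨?_, h2z, fun c c' _ _ => hmin 0 1 c c'⟩)
        intro c hc
        have h := hmin 0 1 c c0
        rw [h2 c hc, mul_zero, sub_zero] at h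
        rcases mul_eq_zero.mp h with h | h
        · exact h
        · exact absurd h hc0
    · push_neg at h2z
      obtain ⟨c0, hc0⟩ := h2z
      have key : ∀ r : Fin 3, ∀ c : Fin (i + j + m), c.val < i + j → M r c = 0 := by
        intro r c hc
        have h := hmin r 2 c c0
        rw [h3 c hc, mul_zero, sub_zero] at h
        rcases mul_eq_zero.mp h with h | h
        · exact h
        · exact absurd h hc0
      exact Or.inr (Or.inr ⟨key 0, key 1, fun r r' c c' _ _ => hmin r r' c c'⟩)
  · rintro (h | ⟨ha, hb, hc⟩ | ⟨ha, hb, hc⟩) <;> intro r r' c c'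
    · have h1 : ∀ c, M 1 c = 0 := fun c => (h c).1
      have h2' : ∀ c, M 2 c = 0 := fun c => (h c).2
      fin_cases r <;> fin_cases r' <;> simp [h1, h2'] <;> ring
    · have htri : ∀ s : Fin 3, s = 0 ∨ s = 1 ∨ s = 2 := by decide
      have hz : ∀ s : Fin 3, ∀ cc : Fin (i + j + m), cc.val < i → M s cc = 0 := by
        intro s cc hcc
        rcases htri s with rfl | rfl | rfl
        · exact ha cc hcc
        · exact h2 cc hcc
        · exact hb cc
      by_cases hr : r = 2
      · subst hr; rw [hb c, hb c']; ring
      · by_cases hr' : r' = 2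
        · subst hr'; rw [hb c, hb c']; ring
        · by_cases hci : c.val < i
          · rw [hz r c hci, hz r' c hci]; ring
          · by_cases hci' : c'.val < i
            · rw [hz r c' hci', hz r' c' hci']; ring
            · have hle := not_lt.mp hci
              have hle' := not_lt.mp hci'
              rcases htri r with rfl | rfl | rfl
              · rcases htri r' with rfl | rfl | rfl
                · ring
                · exact hc c c' hle hle'
                · exact absurd rfl hr'
              · rcases htri r' with rfl | rfl | rfl
                · linear_combination -hc c c' hle hle'
                · ring
                · exact absurd rfl hr'
              · exact absurd rfl hr
    · have hz : ∀ r : Fin 3, ∀ c : Fin (i + j + m), c.val < i + j → M r c = 0 := by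
        intro r c hcc
        fin_cases r
        · exact ha c hcc
        · exact hb c hcc
        · exact h3 c hcc
      by_cases hci : c.val < i + j
      · rw [hz r c hci, hz r' c hci]; ring
      · by_cases hci' : c'.val < i + j
        · rw [hz r c' hci', hz r' c' hci']; ring
        · exact hc r r' c c' (not_lt.mp hci) (not_lt.mp hci')
end
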